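/- Let a_0 > 0 and a_1, a_2, ..., a_T ≥ 0. Then ∑_{t=1}^T a_t / (a_0 + ∑_{i=1}^t a_i) ≤ ln(1 + (∑_{i=1}^T a_i)/a_0). -/

import Mathlib

lemma stmt_3_aux (a : ℕ → ℝ) (ha0 : 0 < a 0) :
    ∀ T : ℕ, (∀ t, 1 ≤ t → t ≤ T → 0 ≤ a t) →
    ∑ t ∈ Finset.Icc 1 T, a t / (a 0 + ∑ i ∈ Finset.Icc 1 t, a i)
      ≤ Real.log (a 0 + ∑ i ∈ Finset.Icc 1 T, a i) - Real.log (a 0) := by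
  intro T
  induction T with
  | zero => intro _; simp
  | succ T ih =>
    intro ha
    have ha' : ∀ t, 1 ≤ t → t ≤ T → 0 ≤ a t :=
      fun t h1 h2 => ha t h1 (h2.trans (Nat.le_succ T))
    have hsum : (0:ℝ) ≤ ∑ i ∈ Finset.Icc 1 T, a i :=
      Finset.sum_nonneg fun i hi => ha' i (Finset.mem_Icc.mp hi).1 (Finset.mem_Icc.mp hi).2
    have hc : 0 ≤ a (T + 1) := ha (T+1) (Nat.succ_le_succ (Nat.zero_le T)) le_rfl
    have hST : 0 < a 0 + ∑ i ∈ Finset.Icc 1 T, a i := by linarith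
    have hS' : 0 < a 0 + ∑ i ∈ Finset.Icc 1 (T+1), a i := by
      rw [Finset.sum_Icc_succ_top (Nat.succ_le_succ (Nat.zero_le T))]; linarith
    have hstep : a (T+1) / (a 0 + ∑ i ∈ Finset.Icc 1 (T+1), a i)
        ≤ Real.log (a 0 + ∑ i ∈ Finset.Icc 1 (T+1), a i)
          - Real.log (a 0 + ∑ i ∈ Finset.Icc 1 T, a i) := by
      set S := a 0 + ∑ i ∈ Finset.Icc 1 T, a i with hSdef
      have hS'eq : a 0 + ∑ i ∈ Finset.Icc 1 (T+1), a i = S + a (T+1) := by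
        rw [Finset.sum_Icc_succ_top (Nat.succ_le_succ (Nat.zero_le T))]; ring
      rw [hS'eq] at hS' ⊢
      have h1 : Real.log (S / (S + a (T+1))) ≤ S / (S + a (T+1)) - 1 :=
        Real.log_le_sub_one_of_pos (div_pos hST hS')
      rw [Real.log_div (ne_of_gt hST) (ne_of_gt hS')] at h1
      have h2 : a (T+1) / (S + a (T+1)) = 1 - S / (S + a (T+1)) := by
        field_simp
        ring
      rw [h2]; linarith
    rw [Finset.sum_Icc_succ_top (Nat.succ_le_succ (Nat.zero_le T))]
    have := ih ha'
    linarith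

theorem stmt_3 (T : ℕ) (a : ℕ → ℝ) (ha0 : 0 < a 0)
    (ha : ∀ t, 1 ≤ t → t ≤ T → 0 ≤ a t) :
    ∑ t ∈ Finset.Icc 1 T, a t / (a 0 + ∑ i ∈ Finset.Icc 1 t, a i)
      ≤ Real.log (1 + (∑ i ∈ Finset.Icc 1 T, a i) / a 0) := by
  have h := stmt_3_aux a ha0 T ha
  have hsum : (0:ℝ) ≤ ∑ i ∈ Finset.Icc 1 T, a i :=
    Finset.sum_nonneg fun i hi => ha i (Finset.mem_Icc.mp hi).1 (Finset.mem_Icc.mp hi).2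
  have heq : 1 + (∑ i ∈ Finset.Icc 1 T, a i) / a 0
      = (a 0 + ∑ i ∈ Finset.Icc 1 T, a i) / a 0 := by
    field_simp
  rw [heq, Real.log_div (by positivity) (ne_of_gt ha0)]
  exact h
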